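/- arXiv:2203.01150 — 3 statements merged into one kernel-verified Lean document; each statement's English description precedes it below -/
import Mathlib

section
/- Consider the action of the dihedral group of order 20 on ZMod 10 generated by the rotations x ↦ x + k and the reflections x ↦ -x + k. This action induces an action on perfect matchings of ZMod 10. Among the perfect matchings in which every pair {i,j} satisfies i - j ∈ {3,5,7} (mod 10), there are exactly 4 orbits under this action. -/
/-- A permutation of `ZMod 10` belonging to the dihedral group of order 20:
a rotation `x ↦ x + k` or a reflection `x ↦ -x + k`. -/
def IsDihedral (φ : Equiv.Perm (ZMod 10)) : Prop :=
  (∃ k : ZMod 10, ∀ x, φ x = x + k) ∨ (∃ k : ZMod 10, ∀ x, φ x = -x + k)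

/-- A perfect matching of `ZMod 10` all of whose pairs `{i,j}` satisfy
`i - j ∈ {3, 5, 7}`. -/
def GoodMatching (M : Finset (Sym2 (ZMod 10))) : Prop :=
  M.card = 5 ∧
  (∀ x : ZMod 10, ∃! p, p ∈ M ∧ x ∈ p) ∧
  ∀ p ∈ M, ∀ i j : ZMod 10, p = s(i, j) →
    i - j = 3 ∨ i - j = 5 ∨ i - j = 7

/-- The dihedral action relates `M` to `M'`. -/
def DihedralRel (M M' : Finset (Sym2 (ZMod 10))) : Prop :=
  ∃ φ : Equiv.Perm (ZMod 10), IsDihedral φ ∧ M' = M.image (Sym2.map φ)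

/- ### Auxiliary definitions -/

instance : DecidablePred GoodMatching := fun M =>
  decidable_of_iff
    (M.card = 5 ∧
      (∀ x : ZMod 10, ∃ p, (p ∈ M ∧ x ∈ p) ∧ ∀ q, (q ∈ M ∧ x ∈ q) → q = p) ∧
      ∀ p ∈ M, ∀ i j : ZMod 10, p = s(i, j) →
        i - j = 3 ∨ i - j = 5 ∨ i - j = 7)
    (by rfl)

def myReps : Fin 4 → Finset (Sym2 (ZMod 10))
  | 0 => {s(0,5),s(1,6),s(2,7),s(3,8),s(4,9)}
  | 1 => {s(0,3),s(4,7),s(8,1),s(2,5),s(6,9)}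
  | 2 => {s(0,5),s(1,8),s(2,9),s(4,7),s(3,6)}
  | 3 => {s(0,5),s(1,6),s(3,8),s(4,7),s(2,9)}

def rotE (k : ZMod 10) : Equiv.Perm (ZMod 10) := Equiv.addRight k
def refE (k : ZMod 10) : Equiv.Perm (ZMod 10) := (Equiv.neg _).trans (Equiv.addRight k)

def DRel' (M M' : Finset (Sym2 (ZMod 10))) : Prop :=
  ∃ k : ZMod 10, M' = M.image (Sym2.map (rotE k)) ∨ M' = M.image (Sym2.map (refE k))

instance : ∀ M M', Decidable (DRel' M M') := fun M M' => by unfold DRel'; infer_instance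

instance (M : Finset (Sym2 (ZMod 10))) : Decidable (∃! i : Fin 4, DRel' (myReps i) M) :=
  decidable_of_iff (∃ i : Fin 4, DRel' (myReps i) M ∧ ∀ j, DRel' (myReps j) M → j = i) (by rfl)

def goodPairs : Finset (Sym2 (ZMod 10)) :=
  Finset.univ.filter (fun p => ∀ i j : ZMod 10, p = s(i, j) → i - j = 3 ∨ i - j = 5 ∨ i - j = 7)

attribute [local instance 2000] Finset.decidableDforallFinset

/- ### Computational core -/

set_option maxRecDepth 20000 in
set_option maxHeartbeats 4000000 in
theorem key : ∀ p1 ∈ goodPairs, (0:ZMod 10) ∈ p1 →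
    ∀ p2 ∈ goodPairs.erase p1, (1:ZMod 10) ∈ p2 →
    ∀ M3 ∈ ((goodPairs.erase p1).erase p2).powersetCard 3,
    (∀ x : ZMod 10, ((insert p1 (insert p2 M3)).filter (fun p => x ∈ p)).card = 1) →
    ∃! i : Fin 4, DRel' (myReps i) (insert p1 (insert p2 M3)) := by
  decide

set_option maxRecDepth 40000 in
theorem reps_good : ∀ i, GoodMatching (myReps i) := by decide

/- ### Relating DRel' and DihedralRel -/

theorem drel_iff (M M' : Finset (Sym2 (ZMod 10))) : DRel' M M' ↔ DihedralRel M M' := by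
  constructor
  · rintro ⟨k, h | h⟩
    · exact ⟨rotE k, Or.inl ⟨k, fun x => rfl⟩, h⟩
    · exact ⟨refE k, Or.inr ⟨k, fun x => rfl⟩, h⟩
  · rintro ⟨φ, hdi, rfl⟩
    rcases hdi with ⟨k, hk⟩ | ⟨k, hk⟩
    · have hφ : ⇑φ = ⇑(rotE k) := funext fun x => hk x
      exact ⟨k, Or.inl (by rw [hφ])⟩
    · have hφ : ⇑φ = ⇑(refE k) := funext fun x => hk x
      exact ⟨k, Or.inr (by rw [hφ])⟩

/- ### Structure lemmas for good matchings -/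

theorem good_subset {M : Finset (Sym2 (ZMod 10))} (h : GoodMatching M) :
    ∀ p ∈ M, p ∈ goodPairs := by
  intro p hp
  exact Finset.mem_filter.2 ⟨Finset.mem_univ _, h.2.2 p hp⟩

theorem good_cover {M : Finset (Sym2 (ZMod 10))} (h : GoodMatching M) :
    ∀ x : ZMod 10, (M.filter (fun p => x ∈ p)).card = 1 := by
  intro x
  obtain ⟨p, ⟨hpM, hxp⟩, huniq⟩ := h.2.1 x
  rw [Finset.card_eq_one]
  refine ⟨p, Finset.eq_singleton_iff_unique_mem.2 ⟨Finset.mem_filter.2 ⟨hpM, hxp⟩, ?_⟩⟩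
  intro q hq
  obtain ⟨hqM, hxq⟩ := Finset.mem_filter.1 hq
  exact huniq q ⟨hqM, hxq⟩

theorem good_not01 {M : Finset (Sym2 (ZMod 10))} (h : GoodMatching M)
    {p : Sym2 (ZMod 10)} (hp : p ∈ M) (h0 : (0:ZMod 10) ∈ p) (h1 : (1:ZMod 10) ∈ p) :
    False := by
  induction p using Sym2.ind with
  | _ a b =>
    have hd := h.2.2 _ hp a b rfl
    rw [Sym2.mem_iff] at h0 h1
    rcases h0 with h0 | h0 <;> rcases h1 with h1 | h1 <;>
      first
        | exact absurd (h0.trans h1.symm) (by decide)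
        | (rw [← h0, ← h1] at hd; revert hd; decide)

/- ### Main theorem -/

/-- Among the matchings of `ZMod 10` whose pairs are at difference `3, 5` or `7`,
there are exactly 4 orbits under the dihedral group of order 20. -/
theorem theta5_dihedral_orbits :
    ∃ reps : Fin 4 → Finset (Sym2 (ZMod 10)),
      (∀ i, GoodMatching (reps i)) ∧
      ∀ M, GoodMatching M → ∃! i, DihedralRel (reps i) M := by
  refine ⟨myReps, reps_good, ?_⟩
  intro M hM
  -- the pair containing 0 and the pair containing 1
  obtain ⟨p1, ⟨hp1M, h0p1⟩, _⟩ := hM.2.1 0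
  obtain ⟨p2, ⟨hp2M, h1p2⟩, _⟩ := hM.2.1 1
  have hne : p2 ≠ p1 := by
    rintro rfl
    exact good_not01 hM hp1M h0p1 h1p2
  have hp2' : p2 ∈ M.erase p1 := Finset.mem_erase.2 ⟨hne, hp2M⟩
  set M3 : Finset (Sym2 (ZMod 10)) := (M.erase p1).erase p2 with hM3
  have hrebuild : insert p1 (insert p2 M3) = M := by
    rw [hM3, Finset.insert_erase hp2', Finset.insert_erase hp1M]
  have hM3mem : M3 ∈ ((goodPairs.erase p1).erase p2).powersetCard 3 := by
    rw [Finset.mem_powersetCard]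
    constructor
    · intro q hq
      obtain ⟨hq2, hq'⟩ := Finset.mem_erase.1 hq
      obtain ⟨hq1, hqM⟩ := Finset.mem_erase.1 hq'
      exact Finset.mem_erase.2 ⟨hq2, Finset.mem_erase.2 ⟨hq1, good_subset hM q hqM⟩⟩
    · rw [hM3, Finset.card_erase_of_mem hp2', Finset.card_erase_of_mem hp1M, hM.1]
  have hcover : ∀ x : ZMod 10, ((insert p1 (insert p2 M3)).filter (fun p => x ∈ p)).card = 1 := by
    rw [hrebuild]; exact good_cover hM
  have hkey := key p1 (good_subset hM p1 hp1M) h0p1 p2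
    (Finset.mem_erase.2 ⟨hne, good_subset hM p2 hp2M⟩) h1p2 M3 hM3mem hcover
  rw [hrebuild] at hkey
  obtain ⟨i, hi, hu⟩ := hkey
  exact ⟨i, (drel_iff _ _).1 hi, fun j hj => hu j ((drel_iff _ _).2 hj)⟩
end

section
/- Define a rotation system for the multigraph Θ₅ (two vertices u, v joined by five parallel edges labeled by Fin 5) to be a pair (σ_u, σ_v) of permutations of Fin 5 each of which is a single 5-cycle. Define the darts to be Fin 5 × Bool, and the face permutation Φ by Φ(e, true) = (σ_v(e), false) and Φ(e, false) = (σ_u(e), true). Say the rotation system is one-faced if Φ acts transitively on the 10 darts. Two rotation systems are equivalent if one can be obtained from the other by some combination of: relabeling edges by a permutation π of Fin 5 (replacing σ_u, σ_v by π σ_u π⁻¹, π σ_v π⁻¹), swapping the roles of u and v (swapping σ_u and σ_v), and reflection (replacing σ_u, σ_v by σ_u⁻¹, σ_v⁻¹). Then there are exactly 3 equivalence classes of one-faced rotation systems for Θ₅. -/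
/-- A rotation system for the multigraph `Θ₅`: a pair of permutations of the
five parallel edges, one rotation for each of the two vertices. -/
abbrev Theta5RotSys := Equiv.Perm (Fin 5) × Equiv.Perm (Fin 5)

/-- Both rotations are single 5-cycles. -/
def IsTheta5 (R : Theta5RotSys) : Prop :=
  (R.1.IsCycle ∧ R.1.support.card = 5) ∧ (R.2.IsCycle ∧ R.2.support.card = 5)

/-- The face permutation on the darts `Fin 5 × Bool`:
`Φ (e, true) = (σ_v e, false)` and `Φ (e, false) = (σ_u e, true)`,
where `σ_u = R.1` and `σ_v = R.2`. -/
def faceNext (R : Theta5RotSys) : Fin 5 × Bool → Fin 5 × Bool :=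
  fun d => if d.2 then (R.2 d.1, false) else (R.1 d.1, true)

/-- The face permutation acts transitively on the 10 darts. -/
def OneFaced (R : Theta5RotSys) : Prop :=
  ∀ d d' : Fin 5 × Bool, ∃ k : ℕ, (faceNext R)^[k] d = d'

/-- Equivalence of rotation systems: relabelling of the edges, optionally
swapping the two vertices, optionally reflecting (inverting both rotations). -/
def EquivTheta5 (R R' : Theta5RotSys) : Prop :=
  ∃ π : Equiv.Perm (Fin 5), ∃ s r : Bool,
    let p := if s then (R.2, R.1) else R
    let q := if r then (p.1⁻¹, p.2⁻¹) else p
    R' = (π * q.1 * π⁻¹, π * q.2 * π⁻¹)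

/-! ### Auxiliary machinery -/

/-- The action of a relabelling `π`, an optional vertex swap `s` and an
optional reflection `r` on a rotation system. -/
def act5 (π : Equiv.Perm (Fin 5)) (s r : Bool) (R : Theta5RotSys) : Theta5RotSys :=
  let p := if s then (R.2, R.1) else R
  let q := if r then (p.1⁻¹, p.2⁻¹) else p
  (π * q.1 * π⁻¹, π * q.2 * π⁻¹)

lemma equivTheta5_iff {R R' : Theta5RotSys} :
    EquivTheta5 R R' ↔ ∃ π : Equiv.Perm (Fin 5), ∃ s r : Bool, R' = act5 π s r R :=
  Iff.rfl

lemma act5_one (R : Theta5RotSys) : act5 1 false false R = R := by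
  simp [act5]

lemma act5_act5 (π₂ π₁ : Equiv.Perm (Fin 5)) (s₂ s₁ r₂ r₁ : Bool) (R : Theta5RotSys) :
    act5 π₂ s₂ r₂ (act5 π₁ s₁ r₁ R) = act5 (π₂ * π₁) (xor s₂ s₁) (xor r₂ r₁) R := by
  cases s₁ <;> cases s₂ <;> cases r₁ <;> cases r₂ <;>
    simp [act5, Prod.ext_iff, mul_assoc, mul_inv_rev]

lemma act5_cancel {R R' : Theta5RotSys} (π : Equiv.Perm (Fin 5)) (s r : Bool)
    (h : R' = act5 π s r R) : R = act5 π⁻¹ s r R' := by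
  rw [h, act5_act5]
  simp [act5_one]

/-- The face permutation as an `Equiv.Perm` of the darts. -/
def fperm (R : Theta5RotSys) : Equiv.Perm (Fin 5 × Bool) where
  toFun := faceNext R
  invFun d := if d.2 then (R.1⁻¹ d.1, false) else (R.2⁻¹ d.1, true)
  left_inv := by rintro ⟨e, b⟩; cases b <;> simp [faceNext]
  right_inv := by rintro ⟨e, b⟩; cases b <;> simp [faceNext]

/-- Decidable surrogate for one-facedness: transitivity within 12 steps. -/
def OF (R : Theta5RotSys) : Prop :=
  ∀ d d' : Fin 5 × Bool, ∃ k, k < 12 ∧ (faceNext R)^[k] d = d'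

instance : DecidablePred OF := fun R => by unfold OF; infer_instance

lemma OF_oneFaced {R : Theta5RotSys} (h : OF R) : OneFaced R := by
  intro d d'
  obtain ⟨k, -, hk⟩ := h d d'
  exact ⟨k, hk⟩

lemma oneFaced_OF {R : Theta5RotSys} (h : OneFaced R) : OF R := by
  intro d d'
  obtain ⟨k, hk⟩ := h d d'
  have hsc : (fperm R).SameCycle d d' := ⟨(k : ℤ), by rw [zpow_natCast]; exact hk⟩
  obtain ⟨i, -, hile, hi⟩ := Equiv.Perm.SameCycle.exists_pow_eq (fperm R) hsc
  have hcard : ((fperm R).cycleOf d).support.card ≤ 10 :=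
    le_trans (Finset.card_le_univ _) (by simp)
  exact ⟨i, by omega, hi⟩

lemma oneFaced_conj (π : Equiv.Perm (Fin 5)) {R : Theta5RotSys} (h : OneFaced R) :
    OneFaced (act5 π false false R) := by
  set g : Fin 5 × Bool → Fin 5 × Bool := fun d => (π d.1, d.2) with hg
  have hcomm : ∀ d, faceNext (act5 π false false R) (g d) = g (faceNext R d) := by
    rintro ⟨e, b⟩
    cases b <;> simp [act5, faceNext, hg, Equiv.Perm.mul_apply]
  have hiter : ∀ k d, (faceNext (act5 π false false R))^[k] (g d) = g ((faceNext R)^[k] d) := by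
    intro k
    induction k with
    | zero => intro d; simp
    | succ n ih =>
        intro d
        rw [Function.iterate_succ_apply, Function.iterate_succ_apply, hcomm, ih]
  intro d d'
  obtain ⟨k, hk⟩ := h (π⁻¹ d.1, d.2) (π⁻¹ d'.1, d'.2)
  have h1 : g (π⁻¹ d.1, d.2) = d := by simp [hg]
  have h2 : g (π⁻¹ d'.1, d'.2) = d' := by simp [hg]
  exact ⟨k, by rw [← h1, hiter, hk, h2]⟩

lemma isFiveCycle_iff {σ : Equiv.Perm (Fin 5)} :
    (σ.IsCycle ∧ σ.support.card = 5) ↔ (σ ^ 5 = 1 ∧ σ ≠ 1) := by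
  constructor
  · rintro ⟨hc, h5⟩
    have ho : orderOf σ = 5 := by rw [hc.orderOf, h5]
    refine ⟨by simpa [ho] using pow_orderOf_eq_one σ, ?_⟩
    rintro rfl
    simp [Equiv.Perm.support_one] at h5
  · rintro ⟨h5, h1⟩
    haveI : Fact (Nat.Prime 5) := ⟨by norm_num⟩
    have ho : orderOf σ = 5 := orderOf_eq_prime h5 h1
    have hc : σ.IsCycle := by
      refine Equiv.Perm.isCycle_of_prime_order' ?_ ?_
      · rw [ho]; norm_num
      · rw [ho]; simp
    refine ⟨hc, ?_⟩
    rw [← hc.orderOf, ho]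

/-- The basic 5-cycle `(0 1 2 3 4)`. -/
def c5 : Equiv.Perm (Fin 5) := finRotate 5

/-- A representative of the second class. -/
def tb : Equiv.Perm (Fin 5) := ⟨![1,3,0,4,2], ![2,0,4,1,3], by decide, by decide⟩

/-- The three representatives. -/
def reps3 : Fin 3 → Theta5RotSys := ![(c5, c5), (c5, tb), (c5, c5 ^ 2)]

def ER (R R' : Theta5RotSys) : Prop :=
  ∃ π : Equiv.Perm (Fin 5), ∃ s r : Bool, R' = act5 π s r R

instance : ∀ R R', Decidable (ER R R') := fun R R' => by unfold ER; infer_instance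

lemma equivTheta5_iff' {R R' : Theta5RotSys} : EquivTheta5 R R' ↔ ER R R' := Iff.rfl

/-- The key finite verification. -/
def KEY : Prop := ∀ τ : Equiv.Perm (Fin 5), τ ^ 5 = 1 → τ ≠ 1 → OF (c5, τ) →
  ∃ i : Fin 3, ER (reps3 i) (c5, τ) ∧ ∀ j : Fin 3, ER (reps3 j) (c5, τ) → j = i

instance : Decidable KEY := by unfold KEY; infer_instance

set_option maxRecDepth 1000000 in
set_option maxHeartbeats 4000000 in
theorem key_s13 : KEY := by decide

lemma reps3_prop : ∀ i : Fin 3,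
    ((reps3 i).1 ^ 5 = 1 ∧ (reps3 i).1 ≠ 1) ∧ ((reps3 i).2 ^ 5 = 1 ∧ (reps3 i).2 ≠ 1) ∧
      OF (reps3 i) := by decide

/-- There are exactly 3 equivalence classes of one-faced rotation systems of
`Θ₅`, i.e. exactly three distinct 2-cell embeddings of `Θ₅` on the double torus. -/
theorem theta5_three_embeddings :
    ∃ reps : Fin 3 → Theta5RotSys,
      (∀ i, IsTheta5 (reps i) ∧ OneFaced (reps i)) ∧
      ∀ R, IsTheta5 R → OneFaced R → ∃! i, EquivTheta5 (reps i) R := by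
  refine ⟨reps3, ?_, ?_⟩
  · intro i
    obtain ⟨h1, h2, h3⟩ := reps3_prop i
    exact ⟨⟨isFiveCycle_iff.mpr h1, isFiveCycle_iff.mpr h2⟩, OF_oneFaced h3⟩
  · intro R hR hOne
    obtain ⟨⟨hc1, hs1⟩, hc2⟩ := hR
    have hconj : IsConj R.1 c5 := by
      refine hc1.isConj (isCycle_finRotate (n := 3)) ?_
      rw [hs1]
      simp [c5, support_finRotate]
    obtain ⟨π, hπ⟩ := isConj_iff.mp hconj
    set τ : Equiv.Perm (Fin 5) := π * R.2 * π⁻¹ with hτdef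
    have hRact : (c5, τ) = act5 π false false R := by
      simp [act5, hπ, hτdef]
    have ⟨h25, h21⟩ := isFiveCycle_iff.mp hc2
    have hτ5 : τ ^ 5 = 1 := by
      rw [hτdef, conj_pow, h25, mul_one, mul_inv_cancel]
    have hτ1 : τ ≠ 1 := by
      intro h
      apply h21
      have := congrArg (fun x => π⁻¹ * x * π) h
      simpa [hτdef, mul_assoc] using this
    have hOFc : OF (c5, τ) := oneFaced_OF (hRact ▸ oneFaced_conj π hOne)
    obtain ⟨i, hi, huniq⟩ := key_s13 τ hτ5 hτ1 hOFc
    have hRR : R = act5 π⁻¹ false false (c5, τ) := act5_cancel π false false hRact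
    refine ⟨i, ?_, ?_⟩
    · obtain ⟨ρ, s, r, hρ⟩ := hi
      refine equivTheta5_iff'.mpr ⟨π⁻¹ * ρ, s, r, ?_⟩
      rw [hRR, hρ, act5_act5]
      simp
    · intro j hj
      obtain ⟨ρ', s', r', hρ'⟩ := equivTheta5_iff'.mp hj
      refine huniq j ⟨π * ρ', s', r', ?_⟩
      rw [hRact, hρ', act5_act5]
      simp
end

section
/- Define a rotation system for K_{3,3} (vertex set Fin 6 with bipartition {0,1,2} versus {3,4,5}, all 9 cross edges present) to be a function assigning to each vertex a cyclic ordering of its 3 neighbors; there are 2⁶ = 64 rotation systems. Define darts to be ordered pairs (x, y) of adjacent vertices, and the face permutation Φ(x, y) = (y, ρ_y(x)) where ρ_y is the rotation at y; faces are the orbits of Φ. Two rotation systems ρ, ρ' are equivalent if there exists a graph automorphism φ of K_{3,3} such that either ρ'_{φ(y)}(φ(x)) = φ(ρ_y(x)) for all darts (x,y), or ρ'_{φ(y)}(φ(x)) = φ(ρ_y⁻¹(x)) for all darts (x,y) (reflection allowed). Then there is exactly 1 equivalence class of rotation systems of K_{3,3} whose face permutation has exactly 1 orbit. -/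
set_option maxRecDepth 100000


/-- Adjacency in `K_{3,3}` with parts `{0,1,2}` and `{3,4,5}`. -/
def adjK33 (x y : Fin 6) : Prop :=
  (x.val < 3 ∧ 3 ≤ y.val) ∨ (3 ≤ x.val ∧ y.val < 3)

/-- A rotation system of `K_{3,3}`: each vertex `y` gets a permutation cyclically
permuting its 3 neighbors (no fixed neighbor) and fixing all non-neighbors. -/
def IsRotSysK33 (ρ : Fin 6 → Equiv.Perm (Fin 6)) : Prop :=
  ∀ y : Fin 6,
    (∀ x, adjK33 x y → adjK33 (ρ y x) y ∧ ρ y x ≠ x) ∧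
    (∀ x, ¬ adjK33 x y → ρ y x = x)

/-- The face permutation on darts: `Φ (x, y) = (y, ρ_y x)`. -/
def facePermK33 (ρ : Fin 6 → Equiv.Perm (Fin 6)) :
    Fin 6 × Fin 6 → Fin 6 × Fin 6 :=
  fun d => (d.2, ρ d.2 d.1)

/-- The face permutation has exactly one orbit on the 18 darts. -/
def OneFaceK33 (ρ : Fin 6 → Equiv.Perm (Fin 6)) : Prop :=
  ∀ d d' : Fin 6 × Fin 6, adjK33 d.1 d.2 → adjK33 d'.1 d'.2 →
    ∃ k : ℕ, (facePermK33 ρ)^[k] d = d'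

/-- Equivalence of rotation systems via a graph automorphism of `K_{3,3}`,
optionally composed with reflection (reversal of all rotations). -/
def EquivRotK33 (ρ ρ' : Fin 6 → Equiv.Perm (Fin 6)) : Prop :=
  ∃ φ : Equiv.Perm (Fin 6),
    (∀ x y, adjK33 x y ↔ adjK33 (φ x) (φ y)) ∧
    ((∀ x y, adjK33 x y → ρ' (φ y) (φ x) = φ (ρ y x)) ∨
     (∀ x y, adjK33 x y → ρ' (φ y) (φ x) = φ ((ρ y)⁻¹ x)))


instance (x y : Fin 6) : Decidable (adjK33 x y) :=
  inferInstanceAs (Decidable ((x.val < 3 ∧ 3 ≤ y.val) ∨ (3 ≤ x.val ∧ y.val < 3)))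

def cHi : Equiv.Perm (Fin 6) := Equiv.swap 3 4 * Equiv.swap 4 5
def cLo : Equiv.Perm (Fin 6) := Equiv.swap 0 1 * Equiv.swap 1 2

def mkRot (b : Fin 6 → Bool) (y : Fin 6) : Equiv.Perm (Fin 6) :=
  if y.val < 3 then (if b y then cHi else cHi⁻¹) else (if b y then cLo else cLo⁻¹)

/-- Any value of a rotation system at a vertex is one of the two explicit 3-cycles. -/
theorem classifyRot : ∀ (y : Fin 6) (σ : Equiv.Perm (Fin 6)),
    (∀ x, adjK33 x y → adjK33 (σ x) y ∧ σ x ≠ x) →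
    (∀ x, ¬ adjK33 x y → σ x = x) →
    σ = mkRot (fun _ => true) y ∨ σ = mkRot (fun _ => false) y := by decide

theorem cHi_inv_ne : cHi⁻¹ ≠ cHi := by decide
theorem cLo_inv_ne : cLo⁻¹ ≠ cLo := by decide

theorem rotsys_eq_mkRot {ρ : Fin 6 → Equiv.Perm (Fin 6)} (h : IsRotSysK33 ρ) :
    ∃ b : Fin 6 → Bool, ρ = mkRot b := by
  refine ⟨fun y => decide (ρ y = mkRot (fun _ => true) y), funext fun y => ?_⟩
  obtain ⟨h1, h2⟩ := h y
  by_cases h4 : ρ y = mkRot (fun _ => true) y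
  · by_cases hy : (y : ℕ) < 3 <;> simp [mkRot, hy, h4]
  · rcases classifyRot y (ρ y) h1 h2 with h3 | h3
    · exact absurd h3 h4
    · by_cases hy : (y : ℕ) < 3 <;> simp [mkRot, hy, h3, cHi_inv_ne, cLo_inv_ne]

/-- On a fintype, any iterate-reachability is bounded by the cardinality. -/
theorem iterate_exists_lt {α : Type*} [Fintype α] (f : α → α) (a b : α)
    (h : ∃ k, f^[k] a = b) : ∃ k, k < Fintype.card α ∧ f^[k] a = b := by
  obtain ⟨k, hk⟩ := h
  induction k using Nat.strong_induction_on with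
  | _ k ih =>
    rcases lt_or_ge k (Fintype.card α) with hlt | hge
    · exact ⟨k, hlt, hk⟩
    · obtain ⟨i, j, hij, hfij⟩ := Fintype.exists_ne_map_eq_of_card_lt
        (fun i : Fin (Fintype.card α + 1) => f^[(i : ℕ)] a) (by simp)
      have key : ∀ i j : Fin (Fintype.card α + 1), (i : ℕ) < (j : ℕ) →
          f^[(i : ℕ)] a = f^[(j : ℕ)] a → ∃ m, m < k ∧ f^[m] a = b := by
        intro i j hlt' heq
        set d := (j : ℕ) - (i : ℕ) with hd
        have hdpos : 0 < d := by omega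
        have hjk : (j : ℕ) ≤ k := by have := j.isLt; omega
        refine ⟨k - d, by omega, ?_⟩
        have hm : k - d = ((k - d) - (i : ℕ)) + (i : ℕ) := by omega
        have hm2 : ((k - d) - (i : ℕ)) + (j : ℕ) = k := by omega
        calc f^[k - d] a = f^[((k - d) - (i : ℕ)) + (i : ℕ)] a := by rw [← hm]
          _ = f^[(k - d) - (i : ℕ)] (f^[(i : ℕ)] a) := Function.iterate_add_apply ..
          _ = f^[(k - d) - (i : ℕ)] (f^[(j : ℕ)] a) := by rw [heq]
          _ = f^[((k - d) - (i : ℕ)) + (j : ℕ)] a := (Function.iterate_add_apply ..).symm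
          _ = f^[k] a := by rw [hm2]
          _ = b := hk
      rcases Ne.lt_or_gt hij with hlt' | hlt'
      · obtain ⟨m, hm1, hm2⟩ := key i j hlt' hfij
        exact ih m hm1 hm2
      · obtain ⟨m, hm1, hm2⟩ := key j i hlt' hfij.symm
        exact ih m hm1 hm2

theorem mk_adj : ∀ (b : Fin 6 → Bool) (x y : Fin 6), adjK33 x y → adjK33 (mkRot b y x) y := by
  decide

theorem mk_adj_inv : ∀ (b : Fin 6 → Bool) (x y : Fin 6), adjK33 x y →
    adjK33 ((mkRot b y)⁻¹ x) y := by decide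

theorem perm_inv_apply_self {α : Type*} (f : Equiv.Perm α) (x : α) : f⁻¹ (f x) = x :=
  f.symm_apply_apply x

theorem perm_apply_inv_self {α : Type*} (f : Equiv.Perm α) (x : α) : f (f⁻¹ x) = x :=
  f.apply_symm_apply x

theorem equiv_symm_mk (b c : Fin 6 → Bool) (h : EquivRotK33 (mkRot b) (mkRot c)) :
    EquivRotK33 (mkRot c) (mkRot b) := by
  obtain ⟨φ, hadj, hcase⟩ := h
  have hadj' : ∀ x y, adjK33 x y ↔ adjK33 (φ.symm x) (φ.symm y) := by
    intro x y
    rw [hadj (φ.symm x) (φ.symm y), Equiv.apply_symm_apply, Equiv.apply_symm_apply]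
  refine ⟨φ.symm, hadj', ?_⟩
  rcases hcase with h | h
  · left
    intro x y hxy
    have h2 : adjK33 (φ.symm x) (φ.symm y) := (hadj' x y).mp hxy
    have h3 := h _ _ h2
    rw [Equiv.apply_symm_apply, Equiv.apply_symm_apply] at h3
    rw [h3, Equiv.symm_apply_apply]
  · right
    intro x y hxy
    have h2 : adjK33 (φ.symm x) (φ.symm y) := (hadj' x y).mp hxy
    have h4 : adjK33 (mkRot b (φ.symm y) (φ.symm x)) (φ.symm y) := mk_adj b _ _ h2
    have h3 := h _ _ h4
    rw [Equiv.apply_symm_apply, perm_inv_apply_self] at h3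
    rw [Equiv.apply_symm_apply] at h3
    have h5 : (mkRot c y)⁻¹ x = φ (mkRot b (φ.symm y) (φ.symm x)) := by
      conv_lhs => rw [← h3]
      simp
    rw [h5, Equiv.symm_apply_apply]

theorem equiv_trans_mk (a b c : Fin 6 → Bool)
    (h1 : EquivRotK33 (mkRot a) (mkRot b)) (h2 : EquivRotK33 (mkRot b) (mkRot c)) :
    EquivRotK33 (mkRot a) (mkRot c) := by
  obtain ⟨φ1, hadj1, hc1⟩ := h1
  obtain ⟨φ2, hadj2, hc2⟩ := h2
  refine ⟨φ1.trans φ2, fun x y => (hadj1 x y).trans (hadj2 _ _), ?_⟩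
  have hA : ∀ x y, adjK33 x y → adjK33 (φ1 x) (φ1 y) := fun x y h => (hadj1 x y).mp h
  rcases hc1 with h1 | h1 <;> rcases hc2 with h2 | h2
  · left
    intro x y hxy
    simp only [Equiv.trans_apply]
    rw [h2 _ _ (hA _ _ hxy), h1 _ _ hxy]
  · right
    intro x y hxy
    simp only [Equiv.trans_apply]
    rw [h2 _ _ (hA _ _ hxy)]
    have hx' : adjK33 ((mkRot a y)⁻¹ x) y := mk_adj_inv a x y hxy
    have := h1 _ _ hx'
    rw [perm_apply_inv_self] at this
    rw [← this, perm_inv_apply_self]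
  · right
    intro x y hxy
    simp only [Equiv.trans_apply]
    rw [h2 _ _ (hA _ _ hxy), h1 _ _ hxy]
  · left
    intro x y hxy
    simp only [Equiv.trans_apply]
    rw [h2 _ _ (hA _ _ hxy)]
    have hx' : adjK33 (mkRot a y x) y := mk_adj a x y hxy
    have := h1 _ _ hx'
    rw [perm_inv_apply_self] at this
    rw [← this, perm_inv_apply_self]

theorem equivB0 : EquivRotK33 (mkRot ![false,false,false,false,false,true]) (mkRot ![false,false,false,false,false,true]) :=
  ⟨⟨![0,1,2,3,4,5], ![0,1,2,3,4,5], by decide, by decide⟩, by decide, Or.inl (by decide)⟩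

theorem equivB1 : EquivRotK33 (mkRot ![false,false,false,false,false,true]) (mkRot ![false,false,false,false,true,false]) :=
  ⟨⟨![0,1,2,5,3,4], ![0,1,2,4,5,3], by decide, by decide⟩, by decide, Or.inl (by decide)⟩

theorem equivB2 : EquivRotK33 (mkRot ![false,false,false,false,false,true]) (mkRot ![false,false,false,false,true,true]) :=
  ⟨⟨![0,1,2,5,4,3], ![0,1,2,5,4,3], by decide, by decide⟩, by decide, Or.inr (by decide)⟩

theorem equivB3 : EquivRotK33 (mkRot ![false,false,false,false,false,true]) (mkRot ![false,false,false,true,false,false]) :=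
  ⟨⟨![0,1,2,4,5,3], ![0,1,2,5,3,4], by decide, by decide⟩, by decide, Or.inl (by decide)⟩

theorem equivB4 : EquivRotK33 (mkRot ![false,false,false,false,false,true]) (mkRot ![false,false,false,true,false,true]) :=
  ⟨⟨![0,1,2,3,5,4], ![0,1,2,3,5,4], by decide, by decide⟩, by decide, Or.inr (by decide)⟩

theorem equivB5 : EquivRotK33 (mkRot ![false,false,false,false,false,true]) (mkRot ![false,false,false,true,true,false]) :=
  ⟨⟨![0,1,2,4,3,5], ![0,1,2,4,3,5], by decide, by decide⟩, by decide, Or.inr (by decide)⟩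

theorem equivB6 : EquivRotK33 (mkRot ![false,false,false,false,false,true]) (mkRot ![false,false,true,false,false,false]) :=
  ⟨⟨![3,4,5,0,1,2], ![3,4,5,0,1,2], by decide, by decide⟩, by decide, Or.inl (by decide)⟩

theorem equivB7 : EquivRotK33 (mkRot ![false,false,false,false,false,true]) (mkRot ![false,false,true,true,true,true]) :=
  ⟨⟨![3,5,4,0,1,2], ![3,4,5,0,2,1], by decide, by decide⟩, by decide, Or.inr (by decide)⟩

theorem equivB8 : EquivRotK33 (mkRot ![false,false,false,false,false,true]) (mkRot ![false,true,false,false,false,false]) :=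
  ⟨⟨![3,5,4,0,2,1], ![3,5,4,0,2,1], by decide, by decide⟩, by decide, Or.inr (by decide)⟩

theorem equivB9 : EquivRotK33 (mkRot ![false,false,false,false,false,true]) (mkRot ![false,true,false,true,true,true]) :=
  ⟨⟨![3,4,5,0,2,1], ![3,5,4,0,1,2], by decide, by decide⟩, by decide, Or.inl (by decide)⟩

theorem equivB10 : EquivRotK33 (mkRot ![false,false,false,false,false,true]) (mkRot ![false,true,true,false,false,false]) :=
  ⟨⟨![3,5,4,1,2,0], ![5,3,4,0,2,1], by decide, by decide⟩, by decide, Or.inl (by decide)⟩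

theorem equivB11 : EquivRotK33 (mkRot ![false,false,false,false,false,true]) (mkRot ![false,true,true,true,true,true]) :=
  ⟨⟨![3,4,5,1,2,0], ![5,3,4,0,1,2], by decide, by decide⟩, by decide, Or.inr (by decide)⟩

theorem equivB12 : EquivRotK33 (mkRot ![false,false,false,false,false,true]) (mkRot ![true,false,false,false,false,false]) :=
  ⟨⟨![3,4,5,1,2,0], ![5,3,4,0,1,2], by decide, by decide⟩, by decide, Or.inl (by decide)⟩

theorem equivB13 : EquivRotK33 (mkRot ![false,false,false,false,false,true]) (mkRot ![true,false,false,true,true,true]) :=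
  ⟨⟨![3,5,4,1,2,0], ![5,3,4,0,2,1], by decide, by decide⟩, by decide, Or.inr (by decide)⟩

theorem equivB14 : EquivRotK33 (mkRot ![false,false,false,false,false,true]) (mkRot ![true,false,true,false,false,false]) :=
  ⟨⟨![3,4,5,0,2,1], ![3,5,4,0,1,2], by decide, by decide⟩, by decide, Or.inr (by decide)⟩

theorem equivB15 : EquivRotK33 (mkRot ![false,false,false,false,false,true]) (mkRot ![true,false,true,true,true,true]) :=
  ⟨⟨![3,5,4,0,2,1], ![3,5,4,0,2,1], by decide, by decide⟩, by decide, Or.inl (by decide)⟩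

theorem equivB16 : EquivRotK33 (mkRot ![false,false,false,false,false,true]) (mkRot ![true,true,false,false,false,false]) :=
  ⟨⟨![3,5,4,0,1,2], ![3,4,5,0,2,1], by decide, by decide⟩, by decide, Or.inl (by decide)⟩

theorem equivB17 : EquivRotK33 (mkRot ![false,false,false,false,false,true]) (mkRot ![true,true,false,true,true,true]) :=
  ⟨⟨![3,4,5,0,1,2], ![3,4,5,0,1,2], by decide, by decide⟩, by decide, Or.inr (by decide)⟩

theorem equivB18 : EquivRotK33 (mkRot ![false,false,false,false,false,true]) (mkRot ![true,true,true,false,false,true]) :=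
  ⟨⟨![0,1,2,4,3,5], ![0,1,2,4,3,5], by decide, by decide⟩, by decide, Or.inl (by decide)⟩

theorem equivB19 : EquivRotK33 (mkRot ![false,false,false,false,false,true]) (mkRot ![true,true,true,false,true,false]) :=
  ⟨⟨![0,1,2,3,5,4], ![0,1,2,3,5,4], by decide, by decide⟩, by decide, Or.inl (by decide)⟩

theorem equivB20 : EquivRotK33 (mkRot ![false,false,false,false,false,true]) (mkRot ![true,true,true,false,true,true]) :=
  ⟨⟨![0,1,2,4,5,3], ![0,1,2,5,3,4], by decide, by decide⟩, by decide, Or.inr (by decide)⟩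

theorem equivB21 : EquivRotK33 (mkRot ![false,false,false,false,false,true]) (mkRot ![true,true,true,true,false,false]) :=
  ⟨⟨![0,1,2,5,4,3], ![0,1,2,5,4,3], by decide, by decide⟩, by decide, Or.inl (by decide)⟩

theorem equivB22 : EquivRotK33 (mkRot ![false,false,false,false,false,true]) (mkRot ![true,true,true,true,false,true]) :=
  ⟨⟨![0,1,2,5,3,4], ![0,1,2,4,5,3], by decide, by decide⟩, by decide, Or.inr (by decide)⟩

theorem equivB23 : EquivRotK33 (mkRot ![false,false,false,false,false,true]) (mkRot ![true,true,true,true,true,false]) :=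
  ⟨⟨![0,1,2,3,4,5], ![0,1,2,3,4,5], by decide, by decide⟩, by decide, Or.inr (by decide)⟩

theorem key1 : ∀ b : Fin 6 → Bool,
    (∀ d' : Fin 6 × Fin 6, adjK33 d'.1 d'.2 →
      ∃ k, k < 36 ∧ (facePermK33 (mkRot b))^[k] ((0 : Fin 6), (3 : Fin 6)) = d') →
    (b = ![false,false,false,false,false,true] ∨ b = ![false,false,false,false,true,false] ∨ b = ![false,false,false,false,true,true] ∨ b = ![false,false,false,true,false,false] ∨ b = ![false,false,false,true,false,true] ∨ b = ![false,false,false,true,true,false] ∨ b = ![false,false,true,false,false,false] ∨ b = ![false,false,true,true,true,true] ∨ b = ![false,true,false,false,false,false] ∨ b = ![false,true,false,true,true,true] ∨ b = ![false,true,true,false,false,false] ∨ b = ![false,true,true,true,true,true] ∨ b = ![true,false,false,false,false,false] ∨ b = ![true,false,false,true,true,true] ∨ b = ![true,false,true,false,false,false] ∨ b = ![true,false,true,true,true,true] ∨ b = ![true,true,false,false,false,false] ∨ b = ![true,true,false,true,true,true] ∨ b = ![true,true,true,false,false,true] ∨ b = ![true,true,true,false,true,false] ∨ b = ![true,true,true,false,true,true]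 ∨ b = ![true,true,true,true,false,false] ∨ b = ![true,true,true,true,false,true] ∨ b = ![true,true,true,true,true,false]) := by decide

theorem toBase : ∀ b : Fin 6 → Bool, (b = ![false,false,false,false,false,true] ∨ b = ![false,false,false,false,true,false] ∨ b = ![false,false,false,false,true,true] ∨ b = ![false,false,false,true,false,false] ∨ b = ![false,false,false,true,false,true] ∨ b = ![false,false,false,true,true,false] ∨ b = ![false,false,true,false,false,false] ∨ b = ![false,false,true,true,true,true] ∨ b = ![false,true,false,false,false,false] ∨ b = ![false,true,false,true,true,true] ∨ b = ![false,true,true,false,false,false] ∨ b = ![false,true,true,true,true,true] ∨ b = ![true,false,false,false,false,false] ∨ b = ![true,false,false,true,true,true] ∨ b = ![true,false,true,false,false,false] ∨ b = ![true,false,true,true,true,true] ∨ b = ![true,true,false,false,false,false] ∨ b = ![true,true,false,true,true,true] ∨ b = ![true,true,true,false,false,true] ∨ b = ![true,true,true,false,true,false] ∨ b = ![true,true,true,false,true,true] ∨ b = ![true,true,true,true,false,false] ∨ b = ![true,true,true,true,false,true] ∨ b = ![true,true,true,true,true,false]) → EquivRotK33 (mkRot ![false,false,false,false,false,true]) (mkRot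 b) := by
  rintro b (rfl|rfl|rfl|rfl|rfl|rfl|rfl|rfl|rfl|rfl|rfl|rfl|rfl|rfl|rfl|rfl|rfl|rfl|rfl|rfl|rfl|rfl|rfl|rfl)
  · exact equivB0
  · exact equivB1
  · exact equivB2
  · exact equivB3
  · exact equivB4
  · exact equivB5
  · exact equivB6
  · exact equivB7
  · exact equivB8
  · exact equivB9
  · exact equivB10
  · exact equivB11
  · exact equivB12
  · exact equivB13
  · exact equivB14
  · exact equivB15
  · exact equivB16
  · exact equivB17
  · exact equivB18
  · exact equivB19
  · exact equivB20
  · exact equivB21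
  · exact equivB22
  · exact equivB23

theorem isRotB0 : IsRotSysK33 (mkRot ![false,false,false,false,false,true]) := by
  intro y
  constructor
  · revert y; decide
  · revert y; decide

theorem oneFaceB0 : OneFaceK33 (mkRot ![false,false,false,false,false,true]) := by
  have h : ∀ d d' : Fin 6 × Fin 6, adjK33 d.1 d.2 → adjK33 d'.1 d'.2 →
      ∃ k, k < 36 ∧ (facePermK33 (mkRot ![false,false,false,false,false,true]))^[k] d = d' := by decide
  intro d d' hd hd'
  obtain ⟨k, _, hk⟩ := h d d' hd hd'
  exact ⟨k, hk⟩

theorem oneFace_bounded {b : Fin 6 → Bool} (h : OneFaceK33 (mkRot b)) :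
    ∀ d' : Fin 6 × Fin 6, adjK33 d'.1 d'.2 →
      ∃ k, k < 36 ∧ (facePermK33 (mkRot b))^[k] ((0 : Fin 6), (3 : Fin 6)) = d' := by
  intro d' hd'
  have hbase : adjK33 ((0 : Fin 6), (3 : Fin 6)).1 ((0 : Fin 6), (3 : Fin 6)).2 := by decide
  obtain ⟨k, hlt, hk⟩ := iterate_exists_lt (facePermK33 (mkRot b)) _ d' (h _ d' hbase hd')
  have hcard : Fintype.card (Fin 6 × Fin 6) = 36 := by simp
  exact ⟨k, by omega, hk⟩

/-- There is exactly one equivalence class of rotation systems of `K_{3,3}` with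
one face: `K_{3,3}` has a unique 2-cell embedding on the double torus. -/
theorem K33_double_torus_unique :
    (∃ ρ, IsRotSysK33 ρ ∧ OneFaceK33 ρ) ∧
    ∀ ρ ρ', IsRotSysK33 ρ → IsRotSysK33 ρ' → OneFaceK33 ρ → OneFaceK33 ρ' →
      EquivRotK33 ρ ρ' := by
  constructor
  · exact ⟨mkRot ![false,false,false,false,false,true], isRotB0, oneFaceB0⟩
  · intro ρ ρ' hρ hρ' hf hf'
    obtain ⟨b, rfl⟩ := rotsys_eq_mkRot hρ
    obtain ⟨b', rfl⟩ := rotsys_eq_mkRot hρ'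
    exact equiv_trans_mk _ _ _
      (equiv_symm_mk _ _ (toBase b (key1 b (oneFace_bounded hf))))
      (toBase b' (key1 b' (oneFace_bounded hf')))
end
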